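/- Let a, b ∈ ℤ with a < b and let f : ℤ → ℝ. If Σ_{t=a+1}^{b} f(t)·(η(t) − η(t−1)) = 0 for every function η : ℤ → ℝ with η(a) = η(b) = 0, then there exists c ∈ ℝ such that f(t) = c for all t with a + 1 ≤ t ≤ b. -/

import Mathlib

/-- Fundamental constancy lemma of the nabla calculus of variations on `T = ℤ`:
if `Σ_{t=a+1}^{b} f(t)·(∇η)(t) = 0` for every `η : ℤ → ℝ` with `η(a) = η(b) = 0`,
where `(∇η)(t) = η(t) − η(t−1)`, then `f` is constant on `{a+1, …, b}`. -/
theorem fundamental_lemma_constancy_int (a b : ℤ) (hab : a < b) (f : ℤ → ℝ)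
    (h : ∀ η : ℤ → ℝ, η a = 0 → η b = 0 →
      ∑ t ∈ Finset.Icc (a + 1) b, f t * (η t - η (t - 1)) = 0) :
    ∃ c : ℝ, ∀ t : ℤ, a + 1 ≤ t → t ≤ b → f t = c := by
  refine ⟨f b, fun t h1 h2 => ?_⟩
  rcases eq_or_lt_of_le h2 with rfl | hlt
  · rfl
  have hne : t ≠ b := ne_of_lt hlt
  set η : ℤ → ℝ := fun x => if t ≤ x ∧ x ≤ b - 1 then 1 else 0 with hη
  have ha : η a = 0 := by simp only [hη]; rw [if_neg (by omega)]
  have hb : η b = 0 := by simp only [hη]; rw [if_neg (by omega)]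
  have key := h η ha hb
  have hsub : ({t, b} : Finset ℤ) ⊆ Finset.Icc (a + 1) b := by
    intro x hx
    simp only [Finset.mem_insert, Finset.mem_singleton] at hx
    rcases hx with rfl | rfl <;> simp [Finset.mem_Icc] <;> omega
  have hzero : ∀ x ∈ Finset.Icc (a + 1) b, x ∉ ({t, b} : Finset ℤ) →
      f x * (η x - η (x - 1)) = 0 := by
    intro x hx hxn
    simp only [Finset.mem_Icc] at hx
    simp only [Finset.mem_insert, Finset.mem_singleton, not_or] at hxn
    obtain ⟨hxt, hxb⟩ := hxn
    have hcond : (t ≤ x ∧ x ≤ b - 1) ↔ (t ≤ x - 1 ∧ x - 1 ≤ b - 1) := by omega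
    simp only [hη]
    rw [if_congr hcond rfl rfl]
    ring
  have hsum := Finset.sum_subset hsub hzero
  rw [Finset.sum_pair hne] at hsum
  have hηt : η t = 1 := by simp only [hη]; rw [if_pos (by omega)]
  have hηt1 : η (t - 1) = 0 := by simp only [hη]; rw [if_neg (by omega)]
  have hηb : η b = 0 := hb
  have hηb1 : η (b - 1) = 1 := by simp only [hη]; rw [if_pos (by omega)]
  rw [hηt, hηt1, hηb, hηb1, key] at hsum
  linarith
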